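/- Existence and uniqueness of the Fréchet mean: let (H,d) be a Hadamard space, a₁,…,a_N ∈ H, and w₁,…,w_N positive weights with Σₙ wₙ = 1. Then the function φ(x) = Σₙ₌₁^N wₙ·d(x,aₙ)² has exactly one minimizer Ξ ∈ H. -/

import Mathlib

open Filter Topology

/-- A Hadamard space structure on a metric space `H`: a geodesic combination map
`geo x y t = (1-t)x ⊕ ty` satisfying the geodesic axioms and the CAT(0) inequality.
(Completeness is imposed via the `CompleteSpace` instance in the theorems.) -/
structure Hadamard (H : Type*) [MetricSpace H] : Type _ where
  geo : H → H → ℝ → H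
  geo_zero : ∀ x y : H, geo x y 0 = x
  geo_one : ∀ x y : H, geo x y 1 = y
  geo_dist : ∀ x y : H, ∀ s ∈ Set.Icc (0 : ℝ) 1, ∀ t ∈ Set.Icc (0 : ℝ) 1,
    dist (geo x y s) (geo x y t) = |s - t| * dist x y
  cat0 : ∀ z x y : H, ∀ t ∈ Set.Icc (0 : ℝ) 1,
    dist z (geo x y t) ^ 2
      ≤ (1 - t) * dist z x ^ 2 + t * dist z y ^ 2 - t * (1 - t) * dist x y ^ 2

/-- A function `f : H → (-∞,∞]` is (geodesically) convex if along every geodesic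
`t ↦ (1-t)x ⊕ ty` it satisfies the convexity inequality. -/
def GeoConvex {H : Type*} [MetricSpace H] (G : Hadamard H) (f : H → EReal) : Prop :=
  ∀ x y : H, ∀ t ∈ Set.Icc (0 : ℝ) 1,
    f (G.geo x y t) ≤ ((1 - t : ℝ) : EReal) * f x + ((t : ℝ) : EReal) * f y

/-- Existence and uniqueness of the Fréchet mean in a Hadamard space. -/
theorem frechet_mean_existsUnique
    {H : Type*} [MetricSpace H] [CompleteSpace H] (G : Hadamard H)
    (N : ℕ) (a : Fin N → H) (w : Fin N → ℝ)
    (hw : ∀ n, 0 < w n) (hsum : ∑ n, w n = 1) :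
    ∃! Ξ : H, ∀ x : H,
      ∑ n, w n * dist Ξ (a n) ^ 2 ≤ ∑ n, w n * dist x (a n) ^ 2 := by
  classical
  have hN : 0 < N := by
    rcases Nat.eq_zero_or_pos N with h | h
    · subst h; simp at hsum
    · exact h
  haveI : Nonempty H := ⟨a ⟨0, hN⟩⟩
  set φ : H → ℝ := fun x => ∑ n, w n * dist x (a n) ^ 2 with hφ
  have hφ0 : ∀ x, 0 ≤ φ x := fun x => Finset.sum_nonneg fun n _ =>
    mul_nonneg (hw n).le (sq_nonneg _)
  have hbdd : BddBelow (Set.range φ) := ⟨0, by rintro _ ⟨x, rfl⟩; exact hφ0 x⟩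
  set m : ℝ := ⨅ x, φ x with hm
  have hm_le : ∀ x, m ≤ φ x := fun x => ciInf_le hbdd x
  -- midpoint estimate
  have key : ∀ x y : H, φ (G.geo x y (1/2)) ≤
      (1/2) * φ x + (1/2) * φ y - (1/4) * dist x y ^ 2 := by
    intro x y
    have h1 : ∀ n : Fin N, dist (G.geo x y (1/2)) (a n) ^ 2 ≤
        (1/2) * dist x (a n) ^ 2 + (1/2) * dist y (a n) ^ 2 - (1/4) * dist x y ^ 2 := by
      intro n
      have h := G.cat0 (a n) x y (1/2) ⟨by norm_num, by norm_num⟩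
      rw [dist_comm (a n) (G.geo x y (1/2)), dist_comm (a n) x, dist_comm (a n) y] at h
      linarith
    have h2 : φ (G.geo x y (1/2)) ≤
        ∑ n, w n * ((1/2) * dist x (a n) ^ 2 + (1/2) * dist y (a n) ^ 2
          - (1/4) * dist x y ^ 2) :=
      Finset.sum_le_sum fun n _ => mul_le_mul_of_nonneg_left (h1 n) (hw n).le
    have h3 : ∀ n : Fin N, w n * ((1/2) * dist x (a n) ^ 2 + (1/2) * dist y (a n) ^ 2
          - (1/4) * dist x y ^ 2)
        = (1/2) * (w n * dist x (a n) ^ 2) + (1/2) * (w n * dist y (a n) ^ 2)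
          - ((1/4) * dist x y ^ 2) * w n := fun n => by ring
    rw [Finset.sum_congr rfl fun n _ => h3 n, Finset.sum_sub_distrib,
      Finset.sum_add_distrib, ← Finset.mul_sum, ← Finset.mul_sum, ← Finset.mul_sum,
      hsum, mul_one] at h2
    exact h2
  have dist_bound : ∀ x y : H, dist x y ^ 2 ≤ 2 * (φ x - m) + 2 * (φ y - m) := by
    intro x y
    have h := key x y
    have h2 := hm_le (G.geo x y (1/2))
    linarith
  -- minimizing sequence
  have hseq : ∀ k : ℕ, ∃ x : H, φ x < m + 1 / (k + 1) := by
    intro k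
    have hpos : (0 : ℝ) < 1 / (k + 1) := by positivity
    exact exists_lt_of_ciInf_lt (lt_add_of_pos_right m hpos)
  choose u hu using hseq
  have hcauchy : CauchySeq u := by
    refine cauchySeq_of_le_tendsto_0 (fun k => Real.sqrt (4 / (k + 1))) ?_ ?_
    · intro i j K hi hj
      have hdi : φ (u i) - m < 1 / (i + 1) := by linarith [hu i]
      have hdj : φ (u j) - m < 1 / (j + 1) := by linarith [hu j]
      have hKi : (1 : ℝ) / (i + 1) ≤ 1 / (K + 1) := by
        apply one_div_le_one_div_of_le (by positivity)
        have : (K : ℝ) ≤ i := Nat.cast_le.mpr hi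
        linarith
      have hKj : (1 : ℝ) / (j + 1) ≤ 1 / (K + 1) := by
        apply one_div_le_one_div_of_le (by positivity)
        have : (K : ℝ) ≤ j := Nat.cast_le.mpr hj
        linarith
      have hsq : dist (u i) (u j) ^ 2 ≤ 4 / (K + 1) := by
        have := dist_bound (u i) (u j)
        have h4 : (4 : ℝ) / (K + 1) = 2 * (1 / (K + 1)) + 2 * (1 / (K + 1)) := by ring
        rw [h4]
        linarith
      calc dist (u i) (u j) = Real.sqrt (dist (u i) (u j) ^ 2) := by
            rw [Real.sqrt_sq dist_nonneg]
        _ ≤ Real.sqrt (4 / (K + 1)) := Real.sqrt_le_sqrt hsq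
    · have h1 : Tendsto (fun k : ℕ => (4 : ℝ) / (k + 1)) atTop (𝓝 0) := by
        have := tendsto_one_div_add_atTop_nhds_zero_nat (𝕜 := ℝ)
        have h := this.const_mul (4 : ℝ)
        simpa [mul_one_div, div_eq_mul_inv] using h
      have h2 := (Real.continuous_sqrt.tendsto 0).comp h1
      rw [Real.sqrt_zero] at h2
      exact h2
  obtain ⟨Ξ, hΞ⟩ := cauchySeq_tendsto_of_complete hcauchy
  have hcont : Continuous φ := by
    apply continuous_finset_sum
    intro n _
    exact continuous_const.mul ((continuous_id.dist continuous_const).pow 2)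
  have hφu : Tendsto (fun k => φ (u k)) atTop (𝓝 (φ Ξ)) := (hcont.tendsto Ξ).comp hΞ
  have hφm : Tendsto (fun k => φ (u k)) atTop (𝓝 m) := by
    have hupper : Tendsto (fun k : ℕ => m + 1 / (k + 1 : ℝ)) atTop (𝓝 m) := by
      have := tendsto_one_div_add_atTop_nhds_zero_nat (𝕜 := ℝ)
      simpa using (tendsto_const_nhds (x := m)).add this
    exact tendsto_of_tendsto_of_tendsto_of_le_of_le tendsto_const_nhds hupper
      (fun k => hm_le (u k)) (fun k => (hu k).le)
  have hΞm : φ Ξ = m := tendsto_nhds_unique hφu hφm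
  refine ⟨Ξ, fun x => ?_, fun y hy => ?_⟩
  · show φ Ξ ≤ φ x
    rw [hΞm]; exact hm_le x
  · have hyΞ : φ y ≤ φ Ξ := hy Ξ
    have hym : φ y = m := le_antisymm (hyΞ.trans_eq hΞm) (hm_le y)
    have := dist_bound y Ξ
    have hd : dist y Ξ = 0 := by nlinarith [dist_nonneg (x := y) (y := Ξ)]
    exact dist_eq_zero.mp hd
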